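/- In Minkowski space, for a point q = p₀ + r₀ l(ω) + r n(q,ω) in the chronological future of p₀ (with l, n null, g(l,n)=1), the gradients with respect to q of the affine parameters satisfy ∇^q r = l and ∇^q r₀ = n. -/

import Mathlib

/-- In Minkowski space, for `q = p₀ + r₀·l + r·n` in the chronological future of
`p₀`, with `l = l(ω(q))` and `n = n(q,ω)` null vector fields normalized by
`g(l,n) = 1`, and whose variations stay `g`-orthogonal to the plane spanned by
`l, n` (they vary in the `m, m̄` directions), the gradients of the affine
parameters satisfy `∇^q r = l` and `∇^q r₀ = n`, i.e.
`dr(v) = g(l,v)` and `dr₀(v) = g(n,v)` for every direction `v`. -/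
theorem stmt18 {V : Type*} [NormedAddCommGroup V] [NormedSpace ℝ V]
    (g : V →ₗ[ℝ] V →ₗ[ℝ] ℝ) (hsymm : ∀ x y : V, g x y = g y x)
    (p₀ : V) (r0 r : V → ℝ) (l n : V → V)
    (hr0 : Differentiable ℝ r0) (hr : Differentiable ℝ r)
    (hl : Differentiable ℝ l) (hn : Differentiable ℝ n)
    (hll : ∀ q, g (l q) (l q) = 0) (hnn : ∀ q, g (n q) (n q) = 0)
    (hln : ∀ q, g (l q) (n q) = 1)
    (hpos : ∀ q : V, q - p₀ = r0 q • l q + r q • n q)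
    (hvar_l : ∀ q v, g (fderiv ℝ l q v) (n q) = 0)
    (hvar_n : ∀ q v, g (fderiv ℝ n q v) (l q) = 0) :
    (∀ q v, fderiv ℝ r q v = g (l q) v) ∧
    (∀ q v, fderiv ℝ r0 q v = g (n q) v) := by
  have hnl : ∀ q, g (n q) (l q) = 1 := fun q => (hsymm _ _).trans (hln q)
  -- pointwise: 2 r0 r = g(u,u)
  have hkey : ∀ w, 2 * (r0 w * r w) = g (w - p₀) (w - p₀) := by
    intro w
    rw [hpos w]
    simp only [map_add, map_smul, LinearMap.add_apply, LinearMap.smul_apply,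
      smul_eq_mul, hll, hnn, hln, hnl]
    ring
  -- curves
  have hcurve : ∀ (p x : V) (t : ℝ), HasDerivAt (fun s : ℝ => p + s • x) x t := by
    intro p x t
    simpa using ((hasDerivAt_id t).smul_const x).const_add p
  -- g(u p, x) is given by the continuous functional r p • dr0 + r0 p • dr
  have hZ : ∀ p x : V, g (p - p₀) x =
      r p * fderiv ℝ r0 p x + r0 p * fderiv ℝ r p x := by
    intro p x
    have hc0 : (fun t : ℝ => p + t • x) 0 = p := by simp
    have hA : HasDerivAt (fun t : ℝ => r0 (p + t • x)) (fderiv ℝ r0 p x) 0 := by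
      have h1 : HasFDerivAt r0 (fderiv ℝ r0 p) ((fun t : ℝ => p + t • x) 0) := by
        rw [hc0]; exact (hr0 p).hasFDerivAt
      simpa [Function.comp_def] using h1.comp_hasDerivAt 0 (hcurve p x 0)
    have hB : HasDerivAt (fun t : ℝ => r (p + t • x)) (fderiv ℝ r p x) 0 := by
      have h1 : HasFDerivAt r (fderiv ℝ r p) ((fun t : ℝ => p + t • x) 0) := by
        rw [hc0]; exact (hr p).hasFDerivAt
      simpa [Function.comp_def] using h1.comp_hasDerivAt 0 (hcurve p x 0)
    have hd1 : HasDerivAt (fun t : ℝ => r0 (p + t • x) * r (p + t • x))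
        (fderiv ℝ r0 p x * r p + r0 p * fderiv ℝ r p x) 0 := by
      simpa [Pi.mul_def] using hA.mul hB
    -- polynomial expression
    have hpoly : ∀ t : ℝ, r0 (p + t • x) * r (p + t • x) =
        r0 p * r p + t * g (p - p₀) x + t ^ 2 * (g x x / 2) := by
      intro t
      have h1 := hkey (p + t • x)
      have h2 : p + t • x - p₀ = (p - p₀) + t • x := by abel
      rw [h2] at h1
      simp only [map_add, map_smul, LinearMap.add_apply, LinearMap.smul_apply,
        smul_eq_mul] at h1
      have h3 := hkey p
      have h4 := hsymm x (p - p₀)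
      linear_combination h1 / 2 - h3 / 2 + (t / 2) * h4
    have hd2 : HasDerivAt (fun t : ℝ => r0 (p + t • x) * r (p + t • x))
        (g (p - p₀) x) 0 := by
      have hp1 : HasDerivAt (fun t : ℝ => t * g (p - p₀) x) (g (p - p₀) x) 0 := by
        simpa using (hasDerivAt_id (0 : ℝ)).mul_const (g (p - p₀) x)
      have hp2 : HasDerivAt (fun t : ℝ => t ^ 2 * (g x x / 2)) 0 0 := by
        simpa using (hasDerivAt_pow 2 (0 : ℝ)).mul_const (g x x / 2)
      have hp : HasDerivAt
          (fun t : ℝ => r0 p * r p + t * g (p - p₀) x + t ^ 2 * (g x x / 2))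
          (g (p - p₀) x) 0 := by
        simpa [Pi.add_def] using (hp1.const_add (r0 p * r p)).add hp2
      exact hp.congr_of_eventuallyEq (Filter.Eventually.of_forall hpoly)
    have := hd1.unique hd2
    linarith [this]
  -- continuity of g y ·
  -- derivative of the full vector identity
  have hstar : ∀ q v : V, v = r0 q • fderiv ℝ l q v + fderiv ℝ r0 q v • l q
      + (r q • fderiv ℝ n q v + fderiv ℝ r q v • n q) := by
    intro q v
    have h1 : HasFDerivAt (fun p => r0 p • l p + r p • n p)
        ((r0 q • fderiv ℝ l q + (fderiv ℝ r0 q).smulRight (l q))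
          + (r q • fderiv ℝ n q + (fderiv ℝ r q).smulRight (n q))) q :=
      ((hr0 q).hasFDerivAt.smul (hl q).hasFDerivAt).add
        ((hr q).hasFDerivAt.smul (hn q).hasFDerivAt)
    have h2 : HasFDerivAt (fun p : V => p - p₀)
        ((r0 q • fderiv ℝ l q + (fderiv ℝ r0 q).smulRight (l q))
          + (r q • fderiv ℝ n q + (fderiv ℝ r q).smulRight (n q))) q := by
      refine h1.congr_of_eventuallyEq (Filter.Eventually.of_forall ?_)
      intro p; exact hpos p
    have h3 : HasFDerivAt (fun p : V => p - p₀) (ContinuousLinearMap.id ℝ V) q :=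
      (hasFDerivAt_id q).sub_const p₀
    have h4 := h3.unique h2
    have h5 := congrArg (fun (T : V →L[ℝ] V) => T v) h4
    simp only [ContinuousLinearMap.id_apply, ContinuousLinearMap.add_apply,
      ContinuousLinearMap.smul_apply, ContinuousLinearMap.smulRight_apply] at h5
    exact h5
  -- main derivative computation for a null field e with the right pairings
  -- we do it for l and for n separately
  have hmain_l : ∀ q v : V, g (q - p₀) (fderiv ℝ l q v) =
      fderiv ℝ r q v - g (l q) v := by
    intro q v
    -- Z : the continuous functional equal to g (q - p₀)
    set Z : V →L[ℝ] ℝ := r q • fderiv ℝ r0 q + r0 q • fderiv ℝ r q with hZdef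
    have hZeq : ∀ x, Z x = g (q - p₀) x := by
      intro x
      rw [hZ q x]
      simp [hZdef, mul_comm]
    -- Zv : the continuous functional equal to g v
    set Zv : V →L[ℝ] ℝ :=
      r (p₀ + v) • fderiv ℝ r0 (p₀ + v) + r0 (p₀ + v) • fderiv ℝ r (p₀ + v) with hZvdef
    have hZveq : ∀ x, Zv x = g v x := by
      intro x
      have := hZ (p₀ + v) x
      rw [add_sub_cancel_left] at this
      rw [this]; simp [hZvdef, mul_comm]
    have hc0 : (fun t : ℝ => q + t • v) 0 = q := by simp
    have hlc : HasDerivAt (fun t : ℝ => l (q + t • v)) (fderiv ℝ l q v) 0 := by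
      have h1 : HasFDerivAt l (fderiv ℝ l q) ((fun t : ℝ => q + t • v) 0) := by
        rw [hc0]; exact (hl q).hasFDerivAt
      simpa [Function.comp_def] using h1.comp_hasDerivAt 0 (hcurve q v 0)
    -- LHS derivative : Z (l (q + t v)) has derivative Z (Lv)
    have hd1 : HasDerivAt (fun t : ℝ => Z (l (q + t • v))) (Z (fderiv ℝ l q v)) 0 := by
      simpa [Function.comp_def] using
        (Z.hasFDerivAt (x := l q)).comp_hasDerivAt_of_eq 0 hlc (by simp)
    -- alternative expression
    have hfe : ∀ t : ℝ, Z (l (q + t • v)) = r (q + t • v) - t * Zv (l (q + t • v)) := by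
      intro t
      rw [hZeq, hZveq]
      have h2 : q - p₀ = (q + t • v - p₀) - t • v := by abel
      rw [h2, map_sub, LinearMap.sub_apply]
      have h3 : g (q + t • v - p₀) (l (q + t • v)) = r (q + t • v) := by
        rw [hpos (q + t • v)]
        simp only [map_add, map_smul, LinearMap.add_apply, LinearMap.smul_apply,
          smul_eq_mul, hll, hnl]
        ring
      rw [h3, map_smul, LinearMap.smul_apply, smul_eq_mul,
        hsymm v (l (q + t • v))]
    -- derivative of RHS
    have hrc : HasDerivAt (fun t : ℝ => r (q + t • v)) (fderiv ℝ r q v) 0 := by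
      have h1 : HasFDerivAt r (fderiv ℝ r q) ((fun t : ℝ => q + t • v) 0) := by
        rw [hc0]; exact (hr q).hasFDerivAt
      simpa [Function.comp_def] using h1.comp_hasDerivAt 0 (hcurve q v 0)
    have hchi : HasDerivAt (fun t : ℝ => Zv (l (q + t • v))) (Zv (fderiv ℝ l q v)) 0 := by
      simpa [Function.comp_def] using
        (Zv.hasFDerivAt (x := l q)).comp_hasDerivAt_of_eq 0 hlc (by simp)
    have hd2 : HasDerivAt (fun t : ℝ => r (q + t • v) - t * Zv (l (q + t • v)))
        (fderiv ℝ r q v - Zv (l q)) 0 := by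
      have hprod : HasDerivAt (fun t : ℝ => t * Zv (l (q + t • v)))
          (Zv (l q)) 0 := by
        have := (hasDerivAt_id (0 : ℝ)).mul hchi
        simpa [Pi.mul_def] using this
      exact hrc.sub hprod
    have hd2' : HasDerivAt (fun t : ℝ => Z (l (q + t • v)))
        (fderiv ℝ r q v - Zv (l q)) 0 :=
      hd2.congr_of_eventuallyEq (Filter.Eventually.of_forall hfe)
    have := hd1.unique hd2'
    rw [hZeq, hZveq, hsymm v (l q)] at this
    linarith [this]
  have hmain_n : ∀ q v : V, g (q - p₀) (fderiv ℝ n q v) =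
      fderiv ℝ r0 q v - g (n q) v := by
    intro q v
    set Z : V →L[ℝ] ℝ := r q • fderiv ℝ r0 q + r0 q • fderiv ℝ r q with hZdef
    have hZeq : ∀ x, Z x = g (q - p₀) x := by
      intro x
      rw [hZ q x]
      simp [hZdef, mul_comm]
    set Zv : V →L[ℝ] ℝ :=
      r (p₀ + v) • fderiv ℝ r0 (p₀ + v) + r0 (p₀ + v) • fderiv ℝ r (p₀ + v) with hZvdef
    have hZveq : ∀ x, Zv x = g v x := by
      intro x
      have := hZ (p₀ + v) x
      rw [add_sub_cancel_left] at this
      rw [this]; simp [hZvdef, mul_comm]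
    have hc0 : (fun t : ℝ => q + t • v) 0 = q := by simp
    have hnc : HasDerivAt (fun t : ℝ => n (q + t • v)) (fderiv ℝ n q v) 0 := by
      have h1 : HasFDerivAt n (fderiv ℝ n q) ((fun t : ℝ => q + t • v) 0) := by
        rw [hc0]; exact (hn q).hasFDerivAt
      simpa [Function.comp_def] using h1.comp_hasDerivAt 0 (hcurve q v 0)
    have hd1 : HasDerivAt (fun t : ℝ => Z (n (q + t • v))) (Z (fderiv ℝ n q v)) 0 := by
      simpa [Function.comp_def] using
        (Z.hasFDerivAt (x := n q)).comp_hasDerivAt_of_eq 0 hnc (by simp)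
    have hfe : ∀ t : ℝ, Z (n (q + t • v)) = r0 (q + t • v) - t * Zv (n (q + t • v)) := by
      intro t
      rw [hZeq, hZveq]
      have h2 : q - p₀ = (q + t • v - p₀) - t • v := by abel
      rw [h2, map_sub, LinearMap.sub_apply]
      have h3 : g (q + t • v - p₀) (n (q + t • v)) = r0 (q + t • v) := by
        rw [hpos (q + t • v)]
        simp only [map_add, map_smul, LinearMap.add_apply, LinearMap.smul_apply,
          smul_eq_mul, hnn, hln]
        ring
      rw [h3, map_smul, LinearMap.smul_apply, smul_eq_mul,
        hsymm v (n (q + t • v))]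
    have hr0c : HasDerivAt (fun t : ℝ => r0 (q + t • v)) (fderiv ℝ r0 q v) 0 := by
      have h1 : HasFDerivAt r0 (fderiv ℝ r0 q) ((fun t : ℝ => q + t • v) 0) := by
        rw [hc0]; exact (hr0 q).hasFDerivAt
      simpa [Function.comp_def] using h1.comp_hasDerivAt 0 (hcurve q v 0)
    have hchi : HasDerivAt (fun t : ℝ => Zv (n (q + t • v))) (Zv (fderiv ℝ n q v)) 0 := by
      simpa [Function.comp_def] using
        (Zv.hasFDerivAt (x := n q)).comp_hasDerivAt_of_eq 0 hnc (by simp)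
    have hd2 : HasDerivAt (fun t : ℝ => r0 (q + t • v) - t * Zv (n (q + t • v)))
        (fderiv ℝ r0 q v - Zv (n q)) 0 := by
      have hprod : HasDerivAt (fun t : ℝ => t * Zv (n (q + t • v)))
          (Zv (n q)) 0 := by
        have := (hasDerivAt_id (0 : ℝ)).mul hchi
        simpa [Pi.mul_def] using this
      exact hr0c.sub hprod
    have hd2' : HasDerivAt (fun t : ℝ => Z (n (q + t • v)))
        (fderiv ℝ r0 q v - Zv (n q)) 0 :=
      hd2.congr_of_eventuallyEq (Filter.Eventually.of_forall hfe)
    have := hd1.unique hd2'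
    rw [hZeq, hZveq, hsymm v (n q)] at this
    linarith [this]
  constructor
  · intro q v
    -- pair the derivative identity with l q
    have h1 := congrArg (fun w => g (l q) w) (hstar q v)
    simp only [map_add, map_smul, smul_eq_mul, hll, hln] at h1
    -- g (l q) (fderiv n q v) = 0
    have h2 : g (l q) (fderiv ℝ n q v) = 0 := by
      rw [hsymm]; exact hvar_n q v
    -- r0 q * g (l q) (fderiv l q v) = g (q - p₀) (fderiv l q v)
    have h3 : r0 q * g (l q) (fderiv ℝ l q v) = g (q - p₀) (fderiv ℝ l q v) := by
      have h4 : r0 q • l q = (q - p₀) - r q • n q := by rw [hpos q]; abel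
      have h5 : g (n q) (fderiv ℝ l q v) = 0 := by
        rw [hsymm]; exact hvar_l q v
      calc r0 q * g (l q) (fderiv ℝ l q v)
          = g (r0 q • l q) (fderiv ℝ l q v) := by
            rw [map_smul, LinearMap.smul_apply, smul_eq_mul]
        _ = g (q - p₀) (fderiv ℝ l q v) - r q * g (n q) (fderiv ℝ l q v) := by
            rw [h4, map_sub, LinearMap.sub_apply, map_smul,
              LinearMap.smul_apply, smul_eq_mul]
        _ = g (q - p₀) (fderiv ℝ l q v) := by rw [h5]; ring
    have h6 := hmain_l q v
    rw [h2, h3, h6] at h1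
    linarith [h1]
  · intro q v
    have h1 := congrArg (fun w => g (n q) w) (hstar q v)
    simp only [map_add, map_smul, smul_eq_mul, hnn, hnl] at h1
    have h2 : g (n q) (fderiv ℝ l q v) = 0 := by
      rw [hsymm]; exact hvar_l q v
    have h3 : r q * g (n q) (fderiv ℝ n q v) = g (q - p₀) (fderiv ℝ n q v) := by
      have h4 : r q • n q = (q - p₀) - r0 q • l q := by rw [hpos q]; abel
      have h5 : g (l q) (fderiv ℝ n q v) = 0 := by
        rw [hsymm]; exact hvar_n q v
      calc r q * g (n q) (fderiv ℝ n q v)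
          = g (r q • n q) (fderiv ℝ n q v) := by
            rw [map_smul, LinearMap.smul_apply, smul_eq_mul]
        _ = g (q - p₀) (fderiv ℝ n q v) - r0 q * g (l q) (fderiv ℝ n q v) := by
            rw [h4, map_sub, LinearMap.sub_apply, map_smul,
              LinearMap.smul_apply, smul_eq_mul]
        _ = g (q - p₀) (fderiv ℝ n q v) := by rw [h5]; ring
    have h6 := hmain_n q v
    rw [h2, h3, h6] at h1
    linarith [h1]
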